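/- Let F : ℝⁿ → ℝ and G : ℝⁿ → ℝʳ be continuously differentiable. Let (x_k) ⊂ ℝⁿ, (μ_k) ⊂ ℝʳ with μ_k ≥ 0 componentwise, and (ρ_k) ⊂ (0, ∞) be sequences, and define the updated multipliers μ⁺_{k,i} = max{0, μ_{k,i} + ρ_k G_i(x_k)}. If x_k → x̄, μ⁺_k → μ̄, and ∇_x L_{ρ_k}(x_k, μ_k; ρ_k) → 0, then ∇F(x̄) + Σ_{i=1}^{r} μ̄_i ∇G_i(x̄) = 0, i.e., (x̄, μ̄) satisfies the stationarity condition of the Lagrangian F(x) + μᵀG(x). -/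

import Mathlib

open Filter InnerProductSpace

lemma hasDerivAt_maxsq (t : ℝ) :
    HasDerivAt (fun s : ℝ => (max 0 s) ^ 2) (2 * max 0 t) t := by
  rcases lt_trichotomy t 0 with h | h | h
  · have : (fun s : ℝ => (max 0 s) ^ 2) =ᶠ[nhds t] fun _ => (0:ℝ) := by
      filter_upwards [Iio_mem_nhds h] with s hs
      simp [max_eq_left (le_of_lt (Set.mem_Iio.mp hs))]
    have h0 : HasDerivAt (fun _ : ℝ => (0:ℝ)) 0 t := hasDerivAt_const t 0
    have := h0.congr_of_eventuallyEq this
    simpa [max_eq_left (le_of_lt h)] using this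
  · subst h
    rw [hasDerivAt_iff_isLittleO]
    rw [Asymptotics.isLittleO_iff]
    intro c hc
    filter_upwards [Metric.ball_mem_nhds (0:ℝ) hc] with s hs
    have hs' : |s| < c := by simpa [Real.dist_eq] using hs
    have h1 : (max 0 s) ^ 2 ≤ |s| * |s| := by
      have hm : max 0 s ≤ |s| := max_le (abs_nonneg s) (le_abs_self s)
      have hm0 : (0:ℝ) ≤ max 0 s := le_max_left _ _
      nlinarith
    have : ‖(max 0 s) ^ 2 - (max 0 (0:ℝ)) ^ 2 - (s - 0) * (2 * max 0 (0:ℝ))‖ ≤ |s| * |s| := by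
      simpa using (le_trans (by simp [abs_of_nonneg (sq_nonneg (max 0 s))]) h1)
    calc ‖(max 0 s) ^ 2 - (max 0 (0:ℝ)) ^ 2 - (s - 0) • (2 * max 0 (0:ℝ))‖ ≤ |s| * |s| := by
          simpa using this
      _ ≤ c * ‖s - 0‖ := by
          simp only [sub_zero, Real.norm_eq_abs]
          exact mul_le_mul_of_nonneg_right (le_of_lt hs') (abs_nonneg s)
  · have : (fun s : ℝ => (max 0 s) ^ 2) =ᶠ[nhds t] fun s => s ^ 2 := by
      filter_upwards [Ioi_mem_nhds h] with s hs
      simp [max_eq_right (le_of_lt (Set.mem_Ioi.mp hs))]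
    have h0 : HasDerivAt (fun s : ℝ => s ^ 2) (2 * t) t := by
      simpa using (hasDerivAt_pow 2 t)
    have := h0.congr_of_eventuallyEq this
    simpa [max_eq_right (le_of_lt h)] using this

theorem stmt_2 {n r : ℕ} (F : EuclideanSpace ℝ (Fin n) → ℝ)
    (G : EuclideanSpace ℝ (Fin n) → Fin r → ℝ)
    (hF : ContDiff ℝ 1 F) (hG : ∀ i, ContDiff ℝ 1 (fun x => G x i))
    (x : ℕ → EuclideanSpace ℝ (Fin n)) (μ : ℕ → Fin r → ℝ) (ρ : ℕ → ℝ)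
    (hμ : ∀ k i, 0 ≤ μ k i) (hρ : ∀ k, 0 < ρ k)
    (μplus : ℕ → Fin r → ℝ)
    (hμplus : ∀ k i, μplus k i = max 0 (μ k i + ρ k * G (x k) i))
    (L : ℕ → EuclideanSpace ℝ (Fin n) → ℝ)
    (hL : ∀ k, L k = fun y => F y +
      (1 / (2 * ρ k)) * ∑ i, ((max 0 (μ k i + ρ k * G y i)) ^ 2 - (μ k i) ^ 2))
    (xbar : EuclideanSpace ℝ (Fin n)) (μbar : Fin r → ℝ)
    (hx : Filter.Tendsto x Filter.atTop (nhds xbar))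
    (hμlim : Filter.Tendsto μplus Filter.atTop (nhds μbar))
    (hgrad : Filter.Tendsto (fun k => gradient (L k) (x k)) Filter.atTop (nhds 0)) :
    gradient F xbar + ∑ i, μbar i • gradient (fun y => G y i) xbar = 0 := by
  -- gradient of L k at x k
  have hFd : ∀ y, HasGradientAt F (gradient F y) y :=
    fun y => ((hF.differentiable one_ne_zero) y).hasGradientAt
  have hGd : ∀ i y, HasGradientAt (fun z => G z i) (gradient (fun z => G z i) y) y :=
    fun i y => (((hG i).differentiable one_ne_zero) y).hasGradientAt
  have key : ∀ k, gradient (L k) (x k)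
      = gradient F (x k) + ∑ i, μplus k i • gradient (fun y => G y i) (x k) := by
    intro k
    have hρk := (hρ k).ne'
    have h2 : ∀ i, HasFDerivAt
        (fun y => (max 0 (μ k i + ρ k * G y i)) ^ 2 - (μ k i) ^ 2)
        ((2 * max 0 (μ k i + ρ k * G (x k) i)) •
          (ρ k • (toDual ℝ _ (gradient (fun y => G y i) (x k))))) (x k) := by
      intro i
      have hGi : HasFDerivAt (fun y => G y i)
          (toDual ℝ _ (gradient (fun y => G y i) (x k))) (x k) :=
        (hGd i (x k)).hasFDerivAt
      have hin : HasFDerivAt (fun y => μ k i + ρ k * G y i)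
          (ρ k • (toDual ℝ _ (gradient (fun y => G y i) (x k)))) (x k) :=
        (hGi.const_mul (ρ k)).const_add (μ k i)
      have := ((hasDerivAt_maxsq (μ k i + ρ k * G (x k) i)).comp_hasFDerivAt (x k) hin).sub_const
        ((μ k i) ^ 2)
      exact this
    have hsum : HasFDerivAt
        (fun y => (1 / (2 * ρ k)) * ∑ i, ((max 0 (μ k i + ρ k * G y i)) ^ 2 - (μ k i) ^ 2))
        ((1 / (2 * ρ k)) • ∑ i, ((2 * max 0 (μ k i + ρ k * G (x k) i)) •
          (ρ k • (toDual ℝ _ (gradient (fun y => G y i) (x k)))))) (x k) := by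
      exact (HasFDerivAt.fun_sum (fun i _ => h2 i)).const_mul _
    have hLk : HasFDerivAt (L k)
        (toDual ℝ _ (gradient F (x k)) +
          (1 / (2 * ρ k)) • ∑ i, ((2 * max 0 (μ k i + ρ k * G (x k) i)) •
          (ρ k • (toDual ℝ _ (gradient (fun y => G y i) (x k)))))) (x k) := by
      rw [hL]
      exact (hFd (x k)).hasFDerivAt.add hsum
    have heq : (1 / (2 * ρ k)) • ∑ i, ((2 * max 0 (μ k i + ρ k * G (x k) i)) •
          (ρ k • (toDual ℝ _ (gradient (fun y => G y i) (x k)))))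
        = ∑ i, μplus k i • (toDual ℝ _ (gradient (fun y => G y i) (x k))) := by
      rw [Finset.smul_sum]
      refine Finset.sum_congr rfl fun i _ => ?_
      rw [smul_smul, smul_smul, hμplus]
      congr 1
      field_simp
    rw [heq] at hLk
    have hLg := hLk.hasGradientAt
    simp only [map_add, map_sum, map_smul, LinearIsometryEquiv.symm_apply_apply] at hLg
    exact hLg.gradient
  -- limits
  have hcF : Continuous fun y => gradient F y := by
    have : Continuous fun y => fderiv ℝ F y := hF.continuous_fderiv one_ne_zero
    exact (toDual ℝ _).symm.continuous.comp this
  have hcG : ∀ i, Continuous fun y => gradient (fun z => G z i) y := by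
    intro i
    have : Continuous fun y => fderiv ℝ (fun z => G z i) y := (hG i).continuous_fderiv one_ne_zero
    exact (toDual ℝ _).symm.continuous.comp this
  have hμi : ∀ i, Tendsto (fun k => μplus k i) atTop (nhds (μbar i)) :=
    fun i => (tendsto_pi_nhds.mp hμlim) i
  have hlim2 : Tendsto (fun k => gradient F (x k)
      + ∑ i, μplus k i • gradient (fun y => G y i) (x k)) atTop
      (nhds (gradient F xbar + ∑ i, μbar i • gradient (fun y => G y i) xbar)) := by
    refine Tendsto.add ((hcF.tendsto xbar).comp hx) ?_
    refine tendsto_finset_sum _ fun i _ => ?_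
    exact (hμi i).smul (((hcG i).tendsto xbar).comp hx)
  have hlim1 : Tendsto (fun k => gradient F (x k)
      + ∑ i, μplus k i • gradient (fun y => G y i) (x k)) atTop (nhds 0) := by
    simpa only [key] using hgrad
  exact tendsto_nhds_unique hlim2 hlim1
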